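/- Assume N = 1, and let S be an arbitrary invertible 2×2 complex matrix, with ξ₁ and ϑ₁ defined via S as in the context. Then (i) an element ω ∈ Ω satisfies dω = 0 if and only if ω ∼ a + Σ_α ξ₁^α a_α + Σ_α ϑ₁^α b_α + Θ₁₁ b for some complex numbers a, a₁, a₂, b₁, b₂, b; and (ii) such a combination is ∼ 0 if and only if a = a₁ = a₂ = b₁ = b₂ = b = 0. In other words, {[1], [ξ₁¹], [ξ₁²], [ϑ₁¹], [ϑ₁²], [Θ₁₁]} is a complete set of independent cohomology classes of d for N = 1. -/

import Mathlib

/-!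
D = 3 supersymmetry algebra cohomology.
`R3 N = ℂ[ψ₁,…,ψ_N, χ₁,…,χ_N]`, `Om3 N` is the free module with basis
`{1, c̃₁, c̃₂, c̃₃, c̃₁c̃₂, c̃₁c̃₃, c̃₂c̃₃, c̃₁c̃₂c̃₃}` (components 0,…,7), and
`d3` is the odd superderivation with `dc̃₁ = P`, `dc̃₂ = Q`, `dc̃₃ = S`, `d|_R = 0`.
-/

open MvPolynomial

noncomputable section

/-- The polynomial ring `ℂ[ψ₁,…,ψ_N, χ₁,…,χ_N]`; `Sum.inl i ↦ ψᵢ`, `Sum.inr i ↦ χᵢ`. -/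
abbrev R3 (N : ℕ) : Type := MvPolynomial (Fin N ⊕ Fin N) ℂ

/-- `Ω`: free `R3`-module with basis
`{1, c̃₁, c̃₂, c̃₃, c̃₁c̃₂, c̃₁c̃₃, c̃₂c̃₃, c̃₁c̃₂c̃₃}` (components 0,…,7). -/
abbrev Om3 (N : ℕ) : Type := Fin 8 → R3 N

/-- The ghost `ψᵢ`. -/
def ψ {N : ℕ} (i : Fin N) : R3 N := X (Sum.inl i)

/-- The ghost `χᵢ`. -/
def χ {N : ℕ} (i : Fin N) : R3 N := X (Sum.inr i)

/-- `P = Σ ψᵢ²`. -/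
def PP (N : ℕ) : R3 N := ∑ i, ψ i ^ 2

/-- `Q = Σ χᵢ²`. -/
def QQ (N : ℕ) : R3 N := ∑ i, χ i ^ 2

/-- `S = Σ ψᵢχᵢ`. -/
def SS (N : ℕ) : R3 N := ∑ i, ψ i * χ i

/-- The differential: the unique R-linear odd superderivation with
`dc̃₁ = P`, `dc̃₂ = Q`, `dc̃₃ = S` and `d|_R = 0`, written out in components:
`d(ω₀ + c̃₁ω₁ + c̃₂ω₂ + c̃₃ω₃ + c̃₁c̃₂ω₄ + c̃₁c̃₃ω₅ + c̃₂c̃₃ω₆ + c̃₁c̃₂c̃₃ω₇)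
 = Pω₁ + Qω₂ + Sω₃ + (Pc̃₂ − Qc̃₁)ω₄ + (Pc̃₃ − Sc̃₁)ω₅ + (Qc̃₃ − Sc̃₂)ω₆
   + (Pc̃₂c̃₃ − Qc̃₁c̃₃ + Sc̃₁c̃₂)ω₇`. -/
def d3 {N : ℕ} (ω : Om3 N) : Om3 N :=
  ![PP N * ω 1 + QQ N * ω 2 + SS N * ω 3,
    -(QQ N * ω 4) - SS N * ω 5,
    PP N * ω 4 - SS N * ω 6,
    PP N * ω 5 + QQ N * ω 6,
    SS N * ω 7,
    -(QQ N * ω 7),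
    PP N * ω 7,
    0]

/-- Embedding of `R` into `Ω` (coefficient of the basis element `1`). -/
def ofR3 {N : ℕ} (r : R3 N) : Om3 N := ![r, 0, 0, 0, 0, 0, 0, 0]

/-- `ω ∼ ω'` iff `ω − ω' = dρ` for some `ρ`. -/
def Equiv3 {N : ℕ} (ω ω' : Om3 N) : Prop := ∃ ρ, ω - ω' = d3 ρ

/-- The invariant `ξᵢ·ξⱼ = ψᵢχⱼ − χᵢψⱼ`. -/
def xidot {N : ℕ} (i j : Fin N) : R3 N := ψ i * χ j - χ i * ψ j

/-- `Θᵢⱼ = i(c̃₃(ψᵢχⱼ + ψⱼχᵢ) − c̃₁χᵢχⱼ − c̃₂ψᵢψⱼ)` as an element of `Ω`. -/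
def Theta {N : ℕ} (i j : Fin N) : Om3 N :=
  ![0,
    -(C Complex.I * (χ i * χ j)),
    -(C Complex.I * (ψ i * ψ j)),
    C Complex.I * (ψ i * χ j + ψ j * χ i),
    0, 0, 0, 0]

/-- The supersymmetry ghost `ξᵢ = (ψᵢ, iχᵢ)·S⁻¹` (row spinor, entries in `R`). -/
def xi3 {N : ℕ} (S : Matrix (Fin 2) (Fin 2) ℂ) (i : Fin N) (α : Fin 2) : R3 N :=
  C (S⁻¹ 0 α) * ψ i + C (Complex.I * S⁻¹ 1 α) * χ i

/-- `ϑᵢ = (i(c̃₃ψᵢ − c̃₁χᵢ), c̃₃χᵢ − c̃₂ψᵢ)·S⁻¹` (row spinor, entries in `Ω`). -/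
def theta3 {N : ℕ} (S : Matrix (Fin 2) (Fin 2) ℂ) (i : Fin N) (α : Fin 2) : Om3 N :=
  ![0,
    -(C (Complex.I * S⁻¹ 0 α) * χ i),
    -(C (S⁻¹ 1 α) * ψ i),
    C (Complex.I * S⁻¹ 0 α) * ψ i + C (S⁻¹ 1 α) * χ i,
    0, 0, 0, 0]

namespace Aux9

@[simp] lemma vec8_0 {α : Type*} (a0 a1 a2 a3 a4 a5 a6 a7 : α) : (![a0,a1,a2,a3,a4,a5,a6,a7]) 0 = a0 := rfl
@[simp] lemma vec8_1 {α : Type*} (a0 a1 a2 a3 a4 a5 a6 a7 : α) : (![a0,a1,a2,a3,a4,a5,a6,a7]) 1 = a1 := rfl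
@[simp] lemma vec8_2 {α : Type*} (a0 a1 a2 a3 a4 a5 a6 a7 : α) : (![a0,a1,a2,a3,a4,a5,a6,a7]) 2 = a2 := rfl
@[simp] lemma vec8_3 {α : Type*} (a0 a1 a2 a3 a4 a5 a6 a7 : α) : (![a0,a1,a2,a3,a4,a5,a6,a7]) 3 = a3 := rfl
@[simp] lemma vec8_4 {α : Type*} (a0 a1 a2 a3 a4 a5 a6 a7 : α) : (![a0,a1,a2,a3,a4,a5,a6,a7]) 4 = a4 := rfl
@[simp] lemma vec8_5 {α : Type*} (a0 a1 a2 a3 a4 a5 a6 a7 : α) : (![a0,a1,a2,a3,a4,a5,a6,a7]) 5 = a5 := rfl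
@[simp] lemma vec8_6 {α : Type*} (a0 a1 a2 a3 a4 a5 a6 a7 : α) : (![a0,a1,a2,a3,a4,a5,a6,a7]) 6 = a6 := rfl
@[simp] lemma vec8_7 {α : Type*} (a0 a1 a2 a3 a4 a5 a6 a7 : α) : (![a0,a1,a2,a3,a4,a5,a6,a7]) 7 = a7 := rfl

lemma om3_ext {N : ℕ} {v w : Om3 N} (h0 : v 0 = w 0) (h1 : v 1 = w 1)
    (h2 : v 2 = w 2) (h3 : v 3 = w 3) (h4 : v 4 = w 4) (h5 : v 5 = w 5)
    (h6 : v 6 = w 6) (h7 : v 7 = w 7) : v = w := by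
  funext i; fin_cases i; exacts [h0,h1,h2,h3,h4,h5,h6,h7]

lemma prime_psi : Prime (X (Sum.inl 0) : R3 1) := by
  let E := ((sumAlgEquiv ℂ (Fin 1) (Fin 1)).toRingEquiv.trans
    (MvPolynomial.finSuccEquiv (MvPolynomial (Fin 1) ℂ) 0).toRingEquiv)
  rw [← MulEquiv.prime_iff E.toMulEquiv]
  have : E.toMulEquiv (X (Sum.inl 0)) = Polynomial.X := by
    show (MvPolynomial.finSuccEquiv (MvPolynomial (Fin 1) ℂ) 0)
      ((sumAlgEquiv ℂ (Fin 1) (Fin 1)) (X (Sum.inl 0))) = Polynomial.X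
    rw [show ((sumAlgEquiv ℂ (Fin 1) (Fin 1)) (X (Sum.inl (0:Fin 1)))) = X 0 from sumAlgEquiv_X_inl ..]
    exact finSuccEquiv_X_zero
  rw [this]
  exact Polynomial.prime_X

lemma prime_chi : Prime (X (Sum.inr 0) : R3 1) := by
  let E := (renameEquiv ℂ (Equiv.sumComm (Fin 1) (Fin 1))).toRingEquiv
  rw [← MulEquiv.prime_iff E.toMulEquiv]
  have : E.toMulEquiv (X (Sum.inr 0)) = (X (Sum.inl 0) : R3 1) := by
    show rename (Equiv.sumComm (Fin 1) (Fin 1)) (X (Sum.inr 0)) = (X (Sum.inl 0) : R3 1)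
    simp
  rw [this]
  exact prime_psi

lemma psi_ne : (X (Sum.inl 0) : R3 1) ≠ 0 := MvPolynomial.X_ne_zero _
lemma chi_ne : (X (Sum.inr 0) : R3 1) ≠ 0 := MvPolynomial.X_ne_zero _

lemma psi_not_dvd_chi : ¬ (X (Sum.inl 0) : R3 1) ∣ X (Sum.inr 0) := by
  rw [X_dvd_X]; simp

lemma chi_not_dvd_psi : ¬ (X (Sum.inr 0) : R3 1) ∣ X (Sum.inl 0) := by
  rw [X_dvd_X]; simp

lemma hPP : PP 1 = X (Sum.inl 0) ^ 2 := by simp [PP, ψ]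
lemma hQQ : QQ 1 = X (Sum.inr 0) ^ 2 := by simp [QQ, χ]
lemma hSS : SS 1 = X (Sum.inl 0) * X (Sum.inr 0) := by simp [SS, ψ, χ]
@[simp] lemma pdlr : pderiv (Sum.inl (0:Fin 1)) (X (Sum.inr 0) : R3 1) = 0 :=
  pderiv_X_of_ne (by simp)
@[simp] lemma pdrl : pderiv (Sum.inr (0:Fin 1)) (X (Sum.inl 0) : R3 1) = 0 :=
  pderiv_X_of_ne (by simp)

lemma hψ : (ψ (0 : Fin 1)) = X (Sum.inl 0) := rfl
lemma hχ : (χ (0 : Fin 1)) = X (Sum.inr 0) := rfl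

lemma decompR (p : R3 1) : ∃ a a1 a2 : ℂ, ∃ r1 r2 r3 : R3 1,
    p = C a + C a1 * X (Sum.inl 0) + C a2 * X (Sum.inr 0)
      + X (Sum.inl 0) ^ 2 * r1 + X (Sum.inr 0) ^ 2 * r2
      + X (Sum.inl 0) * X (Sum.inr 0) * r3 := by
  induction p using MvPolynomial.induction_on with
  | C a => exact ⟨a, 0, 0, 0, 0, 0, by simp⟩
  | add p q hp hq =>
    obtain ⟨a,a1,a2,r1,r2,r3,rfl⟩ := hp
    obtain ⟨b,b1,b2,s1,s2,s3,rfl⟩ := hq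
    exact ⟨a+b, a1+b1, a2+b2, r1+s1, r2+s2, r3+s3, by simp only [C_add]; ring⟩
  | mul_X p i hp =>
    obtain ⟨a,a1,a2,r1,r2,r3,rfl⟩ := hp
    obtain (j|j) := i
    · have hj : j = 0 := Subsingleton.elim _ _
      subst hj
      exact ⟨0, a, 0, C a1 + X (Sum.inl 0) * r1 + X (Sum.inr 0) * r3, 0,
        C a2 + X (Sum.inr 0) * r2, by simp only [C_0]; ring⟩
    · have hj : j = 0 := Subsingleton.elim _ _
      subst hj
      exact ⟨0, 0, a, 0, C a2 + X (Sum.inr 0) * r2 + X (Sum.inl 0) * r3,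
        C a1 + X (Sum.inl 0) * r1, by simp only [C_0]; ring⟩

end Aux9

open Aux9


set_option maxHeartbeats 2000000 in
/-- for `N = 1` and any invertible `S` (equivalent spinor
representation), (i) `dω = 0` iff
`ω ∼ a + Σ_α ξ₁^α a_α + Σ_α ϑ₁^α b_α + Θ₁₁ b` with complex coefficients;
(ii) such a combination is `∼ 0` iff all six coefficients vanish.
I.e. `{[1], [ξ₁¹], [ξ₁²], [ϑ₁¹], [ϑ₁²], [Θ₁₁]}` is a complete set of independent
cohomology classes of `d` for `N = 1`. -/
theorem stmt9 (S : Matrix (Fin 2) (Fin 2) ℂ) (hS : IsUnit S.det) :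
    (∀ ω : Om3 1, d3 ω = 0 ↔
      ∃ a a1 a2 b1 b2 b : ℂ,
        Equiv3 ω
          (ofR3 (C a + xi3 S 0 0 * C a1 + xi3 S 0 1 * C a2)
            + (C b1 : R3 1) • theta3 S 0 0 + (C b2 : R3 1) • theta3 S 0 1 + (C b : R3 1) • Theta 0 0))
    ∧
    (∀ a a1 a2 b1 b2 b : ℂ,
      Equiv3
        ((ofR3 (C a + xi3 S 0 0 * C a1 + xi3 S 0 1 * C a2)
          + (C b1 : R3 1) • theta3 S 0 0 + (C b2 : R3 1) • theta3 S 0 1 + (C b : R3 1) • Theta 0 0 : Om3 1)) 0 ↔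
      (a = 0 ∧ a1 = 0 ∧ a2 = 0 ∧ b1 = 0 ∧ b2 = 0 ∧ b = 0)) := by
  have hinv : S⁻¹ * S = 1 := Matrix.nonsing_inv_mul S hS
  have hinv' : S * S⁻¹ = 1 := Matrix.mul_nonsing_inv S hS
  have e00 : S⁻¹ 0 0 * S 0 0 + S⁻¹ 0 1 * S 1 0 = 1 := by
    have := congrFun (congrFun hinv 0) 0
    simpa [Matrix.mul_apply, Fin.sum_univ_two, Matrix.one_apply] using this
  have e01 : S⁻¹ 0 0 * S 0 1 + S⁻¹ 0 1 * S 1 1 = 0 := by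
    have := congrFun (congrFun hinv 0) 1
    simpa [Matrix.mul_apply, Fin.sum_univ_two, Matrix.one_apply] using this
  have e10 : S⁻¹ 1 0 * S 0 0 + S⁻¹ 1 1 * S 1 0 = 0 := by
    have := congrFun (congrFun hinv 1) 0
    simpa [Matrix.mul_apply, Fin.sum_univ_two, Matrix.one_apply] using this
  have e11 : S⁻¹ 1 0 * S 0 1 + S⁻¹ 1 1 * S 1 1 = 1 := by
    have := congrFun (congrFun hinv 1) 1
    simpa [Matrix.mul_apply, Fin.sum_univ_two, Matrix.one_apply] using this
  have f00 : S 0 0 * S⁻¹ 0 0 + S 0 1 * S⁻¹ 1 0 = 1 := by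
    have := congrFun (congrFun hinv' 0) 0
    simpa [Matrix.mul_apply, Fin.sum_univ_two, Matrix.one_apply] using this
  have f01 : S 0 0 * S⁻¹ 0 1 + S 0 1 * S⁻¹ 1 1 = 0 := by
    have := congrFun (congrFun hinv' 0) 1
    simpa [Matrix.mul_apply, Fin.sum_univ_two, Matrix.one_apply] using this
  have f10 : S 1 0 * S⁻¹ 0 0 + S 1 1 * S⁻¹ 1 0 = 0 := by
    have := congrFun (congrFun hinv' 1) 0
    simpa [Matrix.mul_apply, Fin.sum_univ_two, Matrix.one_apply] using this
  have f11 : S 1 0 * S⁻¹ 0 1 + S 1 1 * S⁻¹ 1 1 = 1 := by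
    have := congrFun (congrFun hinv' 1) 1
    simpa [Matrix.mul_apply, Fin.sum_univ_two, Matrix.one_apply] using this
  constructor
  · intro ω
    constructor
    · intro hd
      have q0 : PP 1 * ω 1 + QQ 1 * ω 2 + SS 1 * ω 3 = 0 := congrFun hd 0
      have q1 : -(QQ 1 * ω 4) - SS 1 * ω 5 = 0 := congrFun hd 1
      have q2 : PP 1 * ω 4 - SS 1 * ω 6 = 0 := congrFun hd 2
      have q4 : SS 1 * ω 7 = 0 := congrFun hd 4
      simp only [hPP, hQQ, hSS] at q0 q1 q2 q4
      have hω7 : ω 7 = 0 := by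
        rcases mul_eq_zero.mp q4 with h | h
        · exact absurd h (mul_ne_zero psi_ne chi_ne)
        · exact h
      have hA2 : X (Sum.inr 0) * ω 4 = -(X (Sum.inl 0) * ω 5) := by
        have hz : X (Sum.inr 0) * (X (Sum.inr 0) * ω 4 + X (Sum.inl 0) * ω 5) = 0 := by
          linear_combination -q1
        have := (mul_eq_zero.mp hz).resolve_left chi_ne
        linear_combination this
      obtain ⟨t, ht⟩ : X (Sum.inl 0) ∣ ω 4 :=
        (prime_psi.dvd_or_dvd ⟨-(ω 5), by linear_combination hA2⟩).resolve_left psi_not_dvd_chi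
      have hω5 : ω 5 = -(X (Sum.inr 0) * t) := by
        have hz : X (Sum.inl 0) * (X (Sum.inr 0) * t + ω 5) = 0 := by
          rw [ht] at hA2; linear_combination hA2
        have := (mul_eq_zero.mp hz).resolve_left psi_ne
        linear_combination this
      have hB : X (Sum.inl 0) ^ 2 * t = X (Sum.inr 0) * ω 6 := by
        have hz : X (Sum.inl 0) * (X (Sum.inl 0) ^ 2 * t - X (Sum.inr 0) * ω 6) = 0 := by
          linear_combination q2 - X (Sum.inl 0) ^ 2 * ht
        have := (mul_eq_zero.mp hz).resolve_left psi_ne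
        linear_combination this
      obtain ⟨u, hu⟩ : X (Sum.inr 0) ∣ t := by
        have hdvd : X (Sum.inr 0) ∣ X (Sum.inl 0) ^ 2 * t := ⟨ω 6, by linear_combination hB⟩
        rcases prime_chi.dvd_or_dvd hdvd with h | h
        · exact absurd (prime_chi.dvd_of_dvd_pow h) chi_not_dvd_psi
        · exact h
      have hω4 : ω 4 = X (Sum.inl 0) * X (Sum.inr 0) * u := by rw [ht, hu]; ring
      have hω5' : ω 5 = -(X (Sum.inr 0) ^ 2 * u) := by rw [hω5, hu]; ring
      have hω6 : ω 6 = X (Sum.inl 0) ^ 2 * u := by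
        have hz : X (Sum.inr 0) * (ω 6 - X (Sum.inl 0) ^ 2 * u) = 0 := by
          rw [hu] at hB; linear_combination -hB
        have := (mul_eq_zero.mp hz).resolve_left chi_ne
        linear_combination this
      obtain ⟨g, hg⟩ : X (Sum.inl 0) ∣ ω 2 := by
        have hdvd : X (Sum.inl 0) ∣ X (Sum.inr 0) ^ 2 * ω 2 :=
          ⟨-(X (Sum.inl 0) * ω 1 + X (Sum.inr 0) * ω 3), by linear_combination q0⟩
        rcases prime_psi.dvd_or_dvd hdvd with h | h
        · exact absurd (prime_psi.dvd_of_dvd_pow h) psi_not_dvd_chi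
        · exact h
      have q0' : X (Sum.inl 0) * ω 1 + X (Sum.inr 0) * ω 3 + X (Sum.inr 0) ^ 2 * g = 0 := by
        have hz : X (Sum.inl 0) * (X (Sum.inl 0) * ω 1 + X (Sum.inr 0) * ω 3
            + X (Sum.inr 0) ^ 2 * g) = 0 := by
          rw [hg] at q0; linear_combination q0
        exact (mul_eq_zero.mp hz).resolve_left psi_ne
      obtain ⟨f, hf⟩ : X (Sum.inr 0) ∣ ω 1 := by
        have hdvd : X (Sum.inr 0) ∣ X (Sum.inl 0) * ω 1 :=
          ⟨-(ω 3 + X (Sum.inr 0) * g), by linear_combination q0'⟩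
        exact (prime_chi.dvd_or_dvd hdvd).resolve_left chi_not_dvd_psi
      have hω3 : ω 3 = -(X (Sum.inl 0) * f) - X (Sum.inr 0) * g := by
        have hz : X (Sum.inr 0) * (ω 3 + X (Sum.inl 0) * f + X (Sum.inr 0) * g) = 0 := by
          rw [hf] at q0'; linear_combination q0'
        have := (mul_eq_zero.mp hz).resolve_left chi_ne
        linear_combination this
      obtain ⟨av, a1', a2', r1, r2, r3, h0d⟩ := decompR (ω 0)
      obtain ⟨f0, fp, f1, fr1, fB, fr3, hfd⟩ := decompR f
      obtain ⟨g0, g1, gc, gB, gs2, gs3, hgd⟩ := decompR g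
      have hb1 : S⁻¹ 0 0 * (Complex.I * f0 * S 0 0 - g0 * S 0 1)
          + S⁻¹ 0 1 * (Complex.I * f0 * S 1 0 - g0 * S 1 1) = Complex.I * f0 := by
        linear_combination Complex.I * f0 * e00 - g0 * e01
      have hb2 : S⁻¹ 1 0 * (Complex.I * f0 * S 0 0 - g0 * S 0 1)
          + S⁻¹ 1 1 * (Complex.I * f0 * S 1 0 - g0 * S 1 1) = -g0 := by
        linear_combination Complex.I * f0 * e10 - g0 * e11
      have ha1 : S⁻¹ 0 0 * (S 0 0 * a1' - Complex.I * S 0 1 * a2')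
          + S⁻¹ 0 1 * (S 1 0 * a1' - Complex.I * S 1 1 * a2') = a1' := by
        linear_combination a1' * e00 - Complex.I * a2' * e01
      have ha2 : Complex.I * (S⁻¹ 1 0 * (S 0 0 * a1' - Complex.I * S 0 1 * a2')
          + S⁻¹ 1 1 * (S 1 0 * a1' - Complex.I * S 1 1 * a2')) = a2' := by
        linear_combination Complex.I * a1' * e10 - Complex.I * Complex.I * a2' * e11
          - a2' * Complex.I_mul_I
      have Hb1 := congrArg (fun z : ℂ => (C z : R3 1)) hb1
      have Hb2 := congrArg (fun z : ℂ => (C z : R3 1)) hb2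
      have Ha1 := congrArg (fun z : ℂ => (C z : R3 1)) ha1
      have Ha2 := congrArg (fun z : ℂ => (C z : R3 1)) ha2
      have Hf1 := congrArg (fun z : ℂ => (C z : R3 1))
        (show f1 = (f1 - g1)/2 + (f1 + g1)/2 by ring)
      have Hg1 := congrArg (fun z : ℂ => (C z : R3 1))
        (show g1 = (f1 + g1)/2 - (f1 - g1)/2 by ring)
      simp only [C_mul, C_add, map_sub, map_neg] at Hb1 Hb2 Ha1 Ha2 Hf1 Hg1
      have HI : (C Complex.I : R3 1) * C Complex.I = -1 := by
        rw [← C_mul, Complex.I_mul_I, map_neg, map_one]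
      refine ⟨av, S 0 0 * a1' - Complex.I * S 0 1 * a2', S 1 0 * a1' - Complex.I * S 1 1 * a2',
        Complex.I * f0 * S 0 0 - g0 * S 0 1, Complex.I * f0 * S 1 0 - g0 * S 1 1,
        Complex.I * ((f1 + g1) / 2),
        ![0, r1, r2, r3,
          -(C ((f1 - g1)/2)) - X (Sum.inr 0) * fB + X (Sum.inl 0) * gB,
          -(C fp + X (Sum.inl 0) * fr1 + X (Sum.inr 0) * fr3) - X (Sum.inr 0) * gB,
          -(C gc + X (Sum.inr 0) * gs2 + X (Sum.inl 0) * gs3) - X (Sum.inl 0) * fB,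
          u], ?_⟩
      apply om3_ext <;>
        simp only [Pi.sub_apply, Pi.add_apply, Pi.smul_apply, smul_eq_mul, d3, ofR3,
          theta3, Theta, xi3, vec8_0, vec8_1, vec8_2, vec8_3, vec8_4, vec8_5, vec8_6,
          vec8_7, hPP, hQQ, hSS, hψ, hχ, C_mul, C_add, map_sub, map_neg, mul_zero,
          zero_mul, add_zero, zero_add, C_0, neg_zero, sub_zero]
      · rw [h0d]
        linear_combination (-(X (Sum.inl 0))) * Ha1 - X (Sum.inr 0) * Ha2
      · rw [hf, hfd]
        linear_combination (X (Sum.inr 0) * C Complex.I) * Hb1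
          + (X (Sum.inr 0) * C f0 + X (Sum.inr 0) ^ 2 * C ((f1 + g1)/2)) * HI
          + X (Sum.inr 0) ^ 2 * Hf1
      · rw [hg, hgd]
        linear_combination X (Sum.inl 0) * Hb2
          + (X (Sum.inl 0) ^ 2 * C ((f1 + g1)/2)) * HI + X (Sum.inl 0) ^ 2 * Hg1
      · rw [hω3, hfd, hgd]
        linear_combination (-(X (Sum.inl 0)) * C Complex.I) * Hb1 - X (Sum.inr 0) * Hb2
          + (-(X (Sum.inl 0) * C f0)
            - 2 * X (Sum.inl 0) * X (Sum.inr 0) * C ((f1 + g1)/2)) * HI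
          - X (Sum.inl 0) * X (Sum.inr 0) * Hf1 - X (Sum.inl 0) * X (Sum.inr 0) * Hg1
      · rw [hω4]
      · rw [hω5']
      · rw [hω6]
      · rw [hω7]
    · rintro ⟨a,a1,a2,b1,b2,b,ρ,hρ⟩
      have hc : ∀ k, ω k = d3 ρ k + ((ofR3 (C a + xi3 S 0 0 * C a1 + xi3 S 0 1 * C a2)
          + (C b1 : R3 1) • theta3 S 0 0 + (C b2 : R3 1) • theta3 S 0 1
          + (C b : R3 1) • Theta 0 0 : Om3 1)) k := by
        intro k
        have := congrFun hρ k
        rw [Pi.sub_apply] at this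
        linear_combination this
      apply om3_ext <;>
      · simp only [d3, vec8_0, vec8_1, vec8_2, vec8_3, vec8_4, vec8_5, vec8_6, vec8_7,
          Pi.zero_apply]
        try simp only [hc 1, hc 2, hc 3, hc 4, hc 5, hc 6, hc 7]
        try simp only [Pi.add_apply, Pi.smul_apply, smul_eq_mul, d3, ofR3, theta3, Theta,
          xi3, vec8_0, vec8_1, vec8_2, vec8_3, vec8_4, vec8_5, vec8_6, vec8_7,
          hPP, hQQ, hSS, hψ, hχ, Pi.zero_apply, mul_zero, add_zero, zero_add, zero_mul]
        try ring
  · intro a a1 a2 b1 b2 b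
    constructor
    · rintro ⟨ρ, hρ⟩
      have h0 := congrFun hρ 0
      have h1 := congrFun hρ 1
      have h2 := congrFun hρ 2
      simp only [Pi.sub_apply, Pi.add_apply, Pi.smul_apply, smul_eq_mul, Pi.zero_apply,
        sub_zero, d3, ofR3, theta3, Theta, xi3, vec8_0, vec8_1, vec8_2, vec8_3, vec8_4,
        vec8_5, vec8_6, vec8_7, mul_zero, add_zero, zero_add, hPP, hQQ, hSS, hψ, hχ]
        at h0 h1 h2
      have t00 := congrArg (eval (fun _ => (0:ℂ))) h0
      have t01 := congrArg (fun p => eval (fun _ => (0:ℂ)) (pderiv (Sum.inl (0:Fin 1)) p)) h0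
      have t02 := congrArg (fun p => eval (fun _ => (0:ℂ)) (pderiv (Sum.inr (0:Fin 1)) p)) h0
      have t11 := congrArg (fun p => eval (fun _ => (0:ℂ)) (pderiv (Sum.inr (0:Fin 1)) p)) h1
      have t12 := congrArg (fun p => eval (fun _ => (0:ℂ))
        (pderiv (Sum.inr (0:Fin 1)) (pderiv (Sum.inr (0:Fin 1)) p))) h1
      have t21 := congrArg (fun p => eval (fun _ => (0:ℂ)) (pderiv (Sum.inl (0:Fin 1)) p)) h2
      have t22 := congrArg (fun p => eval (fun _ => (0:ℂ))
        (pderiv (Sum.inl (0:Fin 1)) (pderiv (Sum.inl (0:Fin 1)) p))) h2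
      simp only [map_add, map_sub, map_neg, map_mul, pderiv_mul, pderiv_C, pderiv_X_self,
        pderiv_pow, pdlr, pdrl, eval_C, eval_X, eval_mul, eval_add, eval_pow,
        Pi.zero_apply, mul_zero, zero_mul, add_zero, zero_add, mul_one, one_mul,
        neg_zero, sub_zero, zero_sub, map_ofNat] at t00 t01 t02 t11 t12 t21 t22
      norm_num [map_natCast, map_one] at t00 t01 t02 t11 t12 t21 t22
      have hcc : (constantCoeff (2 : R3 1) : ℂ) = 2 := map_ofNat _ 2
      rw [hcc] at t12 t22
      have hb : b = 0 := by
        linear_combination (-Complex.I/4) * t12 + (Complex.I/4) * t22 + b * Complex.I_mul_I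
      have u2 : S⁻¹ 1 0 * a1 + S⁻¹ 1 1 * a2 = 0 := by
        linear_combination (-Complex.I) * t02 + (S⁻¹ 1 0 * a1 + S⁻¹ 1 1 * a2) * Complex.I_mul_I
      have u1 : S⁻¹ 0 0 * b1 + S⁻¹ 0 1 * b2 = 0 := by
        linear_combination Complex.I * t11 + (S⁻¹ 0 0 * b1 + S⁻¹ 0 1 * b2) * Complex.I_mul_I
      have u2' : S⁻¹ 1 0 * b1 + S⁻¹ 1 1 * b2 = 0 := by linear_combination -t21
      refine ⟨t00, ?_, ?_, ?_, ?_, hb⟩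
      · linear_combination S 0 0 * t01 + S 0 1 * u2 - a1 * f00 - a2 * f01
      · linear_combination S 1 0 * t01 + S 1 1 * u2 - a1 * f10 - a2 * f11
      · linear_combination S 0 0 * u1 + S 0 1 * u2' - b1 * f00 - b2 * f01
      · linear_combination S 1 0 * u1 + S 1 1 * u2' - b1 * f10 - b2 * f11
    · rintro ⟨rfl,rfl,rfl,rfl,rfl,rfl⟩
      refine ⟨0, ?_⟩
      apply om3_ext <;>
        simp only [d3, ofR3, Theta, theta3, xi3, Pi.sub_apply, Pi.add_apply,
          Pi.smul_apply, smul_eq_mul, Pi.zero_apply, vec8_0, vec8_1, vec8_2, vec8_3,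
          vec8_4, vec8_5, vec8_6, vec8_7, C_0, mul_zero, zero_mul, add_zero, zero_add,
          neg_zero, sub_zero, sub_self, map_zero]
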